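/- arXiv:1406.5469 — 5 statements merged into one kernel-verified Lean document; each statement's English description precedes it below -/
import Mathlib

section
/- Let g be an entire function of the form g(z) = (z-u)e^{h(z)} + a, where h is a polynomial and u ∈ ℂ. If g has exactly one simple critical point located at z = 0 and u ≠ 0, then h has degree 1, i.e., h(z) = cz + d for some constants c, d with c = 1/u. -/
open Polynomial

theorem degree_one_of_unique_simple_critical_point
    (h : Polynomial ℂ) (u aval : ℂ) (hu : u ≠ 0)
    (g : ℂ → ℂ) (hg : ∀ z, g z = (z - u) * Complex.exp (h.eval z) + aval)
    (hcrit : ∀ z : ℂ, deriv g z = 0 ↔ z = 0)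
    (hsimple : iteratedDeriv 2 g 0 ≠ 0) :
    h.degree = 1 ∧ h.coeff 1 = 1 / u := by
  have hgfun : g = fun z => (z - u) * Complex.exp (h.eval z) + aval := funext hg
  set P : Polynomial ℂ := 1 + (X - C u) * h.derivative with hPdef
  have hPeval : ∀ z : ℂ, P.eval z = 1 + (z - u) * h.derivative.eval z := by
    intro z; simp [hPdef]
  -- derivative of g
  have hderiv : ∀ z : ℂ, HasDerivAt g (Complex.exp (h.eval z) * P.eval z) z := by
    intro z
    have h1 : HasDerivAt (fun z => h.eval z) (h.derivative.eval z) z := h.hasDerivAt z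
    have h2 : HasDerivAt (fun z => Complex.exp (h.eval z))
        (Complex.exp (h.eval z) * h.derivative.eval z) z := h1.cexp
    have h3 : HasDerivAt (fun z : ℂ => z - u) 1 z := (hasDerivAt_id z).sub_const u
    have h4 := (h3.mul h2).add_const aval
    simp only [Pi.mul_apply] at h4; rw [← hgfun] at h4
    refine HasDerivAt.congr_deriv h4 ?_
    rw [hPeval]; ring
  have hderiv' : ∀ z : ℂ, deriv g z = Complex.exp (h.eval z) * P.eval z := fun z =>
    (hderiv z).deriv
  have hPzero : ∀ z : ℂ, P.eval z = 0 ↔ z = 0 := by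
    intro z
    rw [← hcrit z, hderiv' z, mul_eq_zero]
    simp [Complex.exp_ne_zero]
  have hP0 : P.eval 0 = 0 := (hPzero 0).mpr rfl
  -- second derivative
  have hPd0 : P.derivative.eval 0 ≠ 0 := by
    have hd2 : HasDerivAt (deriv g)
        (Complex.exp (h.eval 0) * h.derivative.eval 0 * P.eval 0
          + Complex.exp (h.eval 0) * P.derivative.eval 0) 0 := by
      have h1 : HasDerivAt (fun z => h.eval z) (h.derivative.eval 0) 0 := h.hasDerivAt 0
      have h2 := (h1.cexp.mul (P.hasDerivAt 0))
      have : (deriv g) = fun z => Complex.exp (h.eval z) * P.eval z := funext hderiv'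
      rw [this]
      exact h2
    have h2 : iteratedDeriv 2 g 0 = deriv (deriv g) 0 := by
      rw [iteratedDeriv_succ, iteratedDeriv_one]
    rw [h2, hd2.deriv, hP0, mul_zero, zero_add] at hsimple
    intro hc
    rw [hc, mul_zero] at hsimple
    exact hsimple rfl
  have hPne : P ≠ 0 := by
    intro hc
    have := hPzero u
    rw [hc] at this
    exact hu (this.mp (by simp))
  -- root multiplicity of 0 in P is 1
  have hmult : P.rootMultiplicity 0 = 1 := by
    have h1 : 1 ≤ P.rootMultiplicity 0 :=
      (Polynomial.rootMultiplicity_pos hPne).mpr hP0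
    by_contra hc
    have h2 : 1 < P.rootMultiplicity 0 := lt_of_le_of_ne h1 (Ne.symm hc)
    have := Polynomial.isRoot_iterate_derivative_of_lt_rootMultiplicity h2
    simp only [Function.iterate_one] at this
    exact hPd0 this
  -- natDegree P = 1
  have hcard : P.natDegree = Multiset.card P.roots := by
    have hs : P.Splits := IsAlgClosed.splits P
    simpa using (Polynomial.Splits.natDegree_eq_card_roots hs)
  have hallzero : ∀ x ∈ P.roots, (0 : ℂ) = x := by
    intro x hx
    exact ((hPzero x).mp (Polynomial.isRoot_of_mem_roots hx)).symm
  have hcount : P.roots.count 0 = Multiset.card P.roots :=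
    Multiset.count_eq_card.mpr hallzero
  have hdegP : P.natDegree = 1 := by
    rw [hcard, ← hcount, Polynomial.count_roots, hmult]
  -- h.derivative is a nonzero constant
  have hdne : h.derivative ≠ 0 := by
    intro hc
    rw [hPeval 0, hc] at hP0
    simp at hP0
  have hdnat : h.derivative.natDegree = 0 := by
    by_contra hc
    have h1 : ((X : ℂ[X]) - C u).natDegree = 1 := Polynomial.natDegree_X_sub_C u
    have h2 : ((X - C u) * h.derivative).natDegree
        = 1 + h.derivative.natDegree := by
      rw [Polynomial.natDegree_mul (Polynomial.X_sub_C_ne_zero u) hdne, h1]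
    have h3 : P.natDegree = 1 + h.derivative.natDegree := by
      rw [hPdef, add_comm, Polynomial.natDegree_add_eq_left_of_natDegree_lt, h2]
      rw [h2, Polynomial.natDegree_one]
      omega
    omega
  obtain ⟨c, hc⟩ := Polynomial.natDegree_eq_zero.mp hdnat
  have hc0 : h.derivative.eval 0 = c := by rw [← hc]; simp
  have hcval : c = 1 / u := by
    rw [hPeval 0, hc0] at hP0
    field_simp at hP0 ⊢
    linear_combination -hP0
  constructor
  · -- degree h = 1
    have hhne : h.natDegree ≠ 0 := by
      intro hn
      obtain ⟨a, ha⟩ := Polynomial.natDegree_eq_zero.mp hn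
      rw [← ha] at hdne
      simp at hdne
    have hpos : 0 < h.natDegree := Nat.pos_of_ne_zero hhne
    have hnat : h.natDegree = 1 := by
      by_contra hn
      have h2 : 2 ≤ h.natDegree := by omega
      have hcoe : (h.derivative).coeff (h.natDegree - 1) ≠ 0 := by
        rw [Polynomial.coeff_derivative]
        have : h.natDegree - 1 + 1 = h.natDegree := by omega
        rw [this]
        have hl : h.coeff h.natDegree ≠ 0 := by
          rw [← Polynomial.leadingCoeff]
          exact Polynomial.leadingCoeff_ne_zero.mpr (fun hz => hdne (by rw [hz]; simp))
        have : ((h.natDegree - 1 : ℕ) : ℂ) + 1 ≠ 0 :=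
          Nat.cast_add_one_ne_zero (h.natDegree - 1)
        exact mul_ne_zero hl this
      have := Polynomial.le_natDegree_of_ne_zero hcoe
      omega
    rw [Polynomial.degree_eq_natDegree (fun hz => hdne (by rw [hz]; simp)), hnat]
    rfl
  · have : h.coeff 1 = h.derivative.coeff 0 := by
      rw [Polynomial.coeff_derivative]; push_cast; ring
    rw [this, ← hc, hcval]
    simp
end

section
/- Let a ∈ ℂ* and r ∈ (0, ∞) satisfy 1 + 3r/2 - e^r > 0 and |a| > 1/(1 + 3r/2 - e^r). Then for every z with |z| = r, |a z²/2 - z| > |a z²/2 - f_a(z)|, and consequently |f_a(z)| > |z| for all z with |z| = r; in particular f_a maps the circle of radius r outside the closed disk of radius r. -/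
open MeasureTheory intervalIntegral

lemma abs_exp_sub_one_le_gen (w : ℂ) :
    ‖Complex.exp w - 1‖ ≤ Real.exp ‖w‖ - 1 := by
  set R := ‖w‖ with hR
  have hF : ∀ t ∈ Set.uIcc (0:ℝ) 1,
      HasDerivAt (fun t : ℝ => Complex.exp (t * w)) (w * Complex.exp (t * w)) t := by
    intro t _
    have h1 : HasDerivAt (fun u : ℂ => Complex.exp (u * w)) (Complex.exp (↑t * w) * w) ↑t := by
      simpa using (hasDerivAt_mul_const (x := (t:ℂ)) w).cexp
    have h2 := h1.comp_ofReal
    convert h2 using 1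
    ring
  have hG : ∀ t ∈ Set.uIcc (0:ℝ) 1,
      HasDerivAt (fun t : ℝ => Real.exp (t * R)) (R * Real.exp (t * R)) t := by
    intro t _
    have h1 : HasDerivAt (fun t : ℝ => Real.exp (t * R)) (Real.exp (t * R) * R) t := by
      simpa using (hasDerivAt_mul_const (x := t) R).exp
    convert h1 using 1; ring
  have hFc : Continuous fun t : ℝ => w * Complex.exp (↑t * w) :=
    continuous_const.mul (Complex.continuous_exp.comp (Complex.continuous_ofReal.mul continuous_const))
  have hGc : Continuous fun t : ℝ => R * Real.exp (t * R) :=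
    continuous_const.mul (Real.continuous_exp.comp (continuous_id.mul continuous_const))
  have hFi := hFc.intervalIntegrable (μ := volume) 0 1
  have hGi := hGc.intervalIntegrable (μ := volume) 0 1
  have eqF := integral_eq_sub_of_hasDerivAt hF hFi
  have eqG := integral_eq_sub_of_hasDerivAt hG hGi
  simp only [Complex.ofReal_one, Complex.ofReal_zero, one_mul, zero_mul, Complex.exp_zero,
    Real.exp_zero] at eqF eqG
  have key : ‖∫ t in (0:ℝ)..1, w * Complex.exp (↑t * w)‖ ≤
      ∫ t in (0:ℝ)..1, R * Real.exp (t * R) := by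
    refine le_trans (intervalIntegral.norm_integral_le_integral_norm (by norm_num)) ?_
    apply intervalIntegral.integral_mono_on (by norm_num) hFi.norm hGi
    intro t ht
    have ht0 : 0 ≤ t := ht.1
    rw [norm_mul, Complex.norm_exp]
    gcongr
    calc ((t:ℂ) * w).re = t * w.re := by simp
      _ ≤ t * R := mul_le_mul_of_nonneg_left (Complex.re_le_norm w) ht0
  rw [eqF, eqG] at key
  simpa using key

lemma gbound (z : ℂ) :
    ‖Complex.exp z * (z - 1) + 1 - z ^ 2 / 2‖ ≤
      Real.exp ‖z‖ * (‖z‖ - 1) + 1 - ‖z‖ ^ 2 / 2 := by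
  set R := ‖z‖ with hR
  have hF : ∀ t ∈ Set.uIcc (0:ℝ) 1,
      HasDerivAt (fun t : ℝ => Complex.exp (↑t * z) * (↑t * z - 1) + 1 - (↑t * z) ^ 2 / 2)
        (z * ((↑t * z) * (Complex.exp (↑t * z) - 1))) t := by
    intro t _
    have hmul : HasDerivAt (fun u : ℂ => u * z) z (↑t : ℂ) := hasDerivAt_mul_const z
    have h1 : HasDerivAt (fun u : ℂ => Complex.exp (u * z) * (u * z - 1) + 1 - (u * z) ^ 2 / 2)
        (z * ((↑t * z) * (Complex.exp (↑t * z) - 1))) ↑t := by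
      have := ((hmul.cexp.mul (hmul.sub_const 1)).add_const 1).sub ((hmul.pow 2).div_const 2)
      refine this.congr_deriv ?_
      push_cast
      ring
    exact h1.comp_ofReal
  have hG : ∀ t ∈ Set.uIcc (0:ℝ) 1,
      HasDerivAt (fun t : ℝ => Real.exp (t * R) * (t * R - 1) + 1 - (t * R) ^ 2 / 2)
        (R * ((t * R) * (Real.exp (t * R) - 1))) t := by
    intro t _
    have hmul : HasDerivAt (fun u : ℝ => u * R) R t := hasDerivAt_mul_const R
    have := ((hmul.exp.mul (hmul.sub_const 1)).add_const 1).sub ((hmul.pow 2).div_const 2)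
    refine this.congr_deriv ?_
    push_cast
    ring
  have hFc : Continuous fun t : ℝ => z * ((↑t * z) * (Complex.exp (↑t * z) - 1)) :=
    continuous_const.mul ((Complex.continuous_ofReal.mul continuous_const).mul
      ((Complex.continuous_exp.comp (Complex.continuous_ofReal.mul continuous_const)).sub
        continuous_const))
  have hGc : Continuous fun t : ℝ => R * ((t * R) * (Real.exp (t * R) - 1)) :=
    continuous_const.mul ((continuous_id.mul continuous_const).mul
      ((Real.continuous_exp.comp (continuous_id.mul continuous_const)).sub continuous_const))
  have hFi := hFc.intervalIntegrable (μ := volume) 0 1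
  have hGi := hGc.intervalIntegrable (μ := volume) 0 1
  have eqF := integral_eq_sub_of_hasDerivAt hF hFi
  have eqG := integral_eq_sub_of_hasDerivAt hG hGi
  simp only [Complex.ofReal_one, Complex.ofReal_zero, one_mul, zero_mul, Complex.exp_zero,
    Real.exp_zero] at eqF eqG
  have key : ‖∫ t in (0:ℝ)..1, z * ((↑t * z) * (Complex.exp (↑t * z) - 1))‖ ≤
      ∫ t in (0:ℝ)..1, R * ((t * R) * (Real.exp (t * R) - 1)) := by
    refine le_trans (intervalIntegral.norm_integral_le_integral_norm (by norm_num)) ?_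
    apply intervalIntegral.integral_mono_on (by norm_num) hFi.norm hGi
    intro t ht
    have ht0 : 0 ≤ t := ht.1
    have habs_tz : ‖(↑t * z)‖ = t * R := by
      rw [norm_mul, Complex.norm_of_nonneg ht0]
    have hexp : ‖Complex.exp (↑t * z) - 1‖ ≤ Real.exp (t * R) - 1 := by
      have := abs_exp_sub_one_le_gen (↑t * z)
      rwa [habs_tz] at this
    have h1 : (0:ℝ) ≤ Real.exp (t * R) - 1 := by
      have : (1:ℝ) ≤ Real.exp (t * R) := Real.one_le_exp (by positivity)
      linarith
    rw [norm_mul, norm_mul,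
      habs_tz]
    gcongr
  rw [eqF, eqG] at key
  calc ‖Complex.exp z * (z - 1) + 1 - z ^ 2 / 2‖
      = ‖(Complex.exp z * (z - 1) + 1 - z ^ 2 / 2) -
          (Complex.exp 0 * ((0:ℂ) - 1) + 1 - (0:ℂ) ^ 2 / 2)‖ := by norm_num
    _ ≤ (Real.exp R * (R - 1) + 1 - R ^ 2 / 2) - (Real.exp 0 * ((0:ℝ) - 1) + 1 - (0:ℝ) ^ 2 / 2) := by
        convert key using 2 <;> norm_num
    _ = Real.exp R * (R - 1) + 1 - R ^ 2 / 2 := by norm_num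

noncomputable def fa (a : ℂ) (z : ℂ) : ℂ := a * (Complex.exp z * (z - 1) + 1)

theorem fa_expands_circle (a : ℂ) (ha : a ≠ 0) (r : ℝ) (hr : 0 < r)
    (h1 : 0 < 1 + 3 * r / 2 - Real.exp r)
    (h2 : 1 / (1 + 3 * r / 2 - Real.exp r) < ‖a‖) :
    ∀ z : ℂ, ‖z‖ = r →
      ‖a * z ^ 2 / 2 - fa a z‖ < ‖a * z ^ 2 / 2 - z‖ ∧
        ‖z‖ < ‖fa a z‖ := by
  intro z hz
  set A := ‖a‖ with hA
  have hA0 : 0 < A := norm_pos_iff.mpr ha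
  have h2' : 1 < A * (1 + 3 * r / 2 - Real.exp r) := by
    rw [div_lt_iff₀ h1] at h2
    linarith [h2]
  -- upper bound on |a z^2/2 - fa a z|
  have hdiff : a * z ^ 2 / 2 - fa a z = -(a * (Complex.exp z * (z - 1) + 1 - z ^ 2 / 2)) := by
    unfold fa; ring
  have habs_diff : ‖a * z ^ 2 / 2 - fa a z‖ =
      A * ‖Complex.exp z * (z - 1) + 1 - z ^ 2 / 2‖ := by
    rw [hdiff, norm_neg, norm_mul]
  have hg := gbound z
  rw [hz] at hg
  have hquad : 1 + r + r ^ 2 / 2 ≤ Real.exp r := Real.quadratic_le_exp_of_nonneg hr.le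
  have hstep1 : Real.exp r * (r - 1) + 1 - r ^ 2 / 2 ≤ r * (Real.exp r - 1 - r) := by
    nlinarith [hquad]
  have hupper : ‖a * z ^ 2 / 2 - fa a z‖ ≤ A * (r * (Real.exp r - 1 - r)) := by
    rw [habs_diff]
    exact mul_le_mul_of_nonneg_left (hg.trans hstep1) hA0.le
  -- strict middle inequality
  have hmid : A * (r * (Real.exp r - 1 - r)) < A * r ^ 2 / 2 - r := by
    nlinarith [mul_lt_mul_of_pos_right h2' hr]
  -- |a z^2/2| = A r^2 / 2
  have habs_az : ‖a * z ^ 2 / 2‖ = A * r ^ 2 / 2 := by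
    rw [norm_div, norm_mul, norm_pow, hz]
    norm_num [hA]
  -- lower bound on |a z^2/2 - z|
  have hlower : A * r ^ 2 / 2 - r ≤ ‖a * z ^ 2 / 2 - z‖ := by
    have := norm_sub_norm_le (a * z ^ 2 / 2) z
    rw [habs_az, hz] at this
    exact this
  have part1 : ‖a * z ^ 2 / 2 - fa a z‖ < ‖a * z ^ 2 / 2 - z‖ :=
    lt_of_le_of_lt hupper (lt_of_lt_of_le hmid hlower)
  refine ⟨part1, ?_⟩
  -- |fa a z| ≥ |a z^2/2| - |a z^2/2 - fa a z| > r
  have htri : ‖a * z ^ 2 / 2‖ - ‖a * z ^ 2 / 2 - fa a z‖ ≤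
      ‖fa a z‖ := by
    have := norm_sub_norm_le (a * z ^ 2 / 2) (a * z ^ 2 / 2 - fa a z)
    simp only [sub_sub_cancel] at this
    exact this
  rw [hz]
  rw [habs_az] at htri
  linarith [hupper, hmid, htri]
end

section
/- There exists R > 0 (e.g. R = 10) such that the main hyperbolic component C⁰ = {a ∈ ℂ* : a belongs to the immediate basin of the superattracting fixed point 0 of f_a} is contained in the disk {|a| ≤ R}; in particular C⁰ is bounded. -/
open Filter

/-- The basin of attraction of the superattracting fixed point `0` of `fa a`. -/
def basin (a : ℂ) : Set ℂ := {z | Tendsto (fun n => (fa a)^[n] z) atTop (nhds 0)}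

/-- The immediate basin: the connected component of the basin containing `0`. -/
def immediateBasin (a : ℂ) : Set ℂ := connectedComponentIn (basin a) 0

/-- The main hyperbolic component. -/
def mainHypComp : Set ℂ := {a | a ≠ 0 ∧ a ∈ immediateBasin a}

/-- Two-sided estimate on `g(z) = exp z * (z-1) + 1` for `|z| ≤ 1/2`. -/
lemma g_bounds (z : ℂ) (hz : ‖z‖ ≤ 1/2) :
    ‖z‖ ^ 2 / 12 ≤ ‖Complex.exp z * (z - 1) + 1‖ ∧
    ‖Complex.exp z * (z - 1) + 1‖ ≤ ‖z‖ ^ 2 := by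
  set r := ‖z‖ with hr
  have hr0 : 0 ≤ r := norm_nonneg z
  have hz1 : ‖z‖ ≤ 1 := le_trans hz (by norm_num)
  have hE := Complex.exp_bound hz1 (by norm_num : 0 < 3)
  have hsum : (∑ m ∈ Finset.range 3, z ^ m / m.factorial) = 1 + z + z^2/2 := by
    simp [Finset.sum_range_succ, Nat.factorial]
  rw [hsum] at hE
  set E := Complex.exp z - (1 + z + z^2/2) with hEdef
  have hEbound : ‖E‖ ≤ 2/9 * r^3 := by
    convert hE using 1
    norm_num [Nat.factorial]
    ring
  have key : Complex.exp z * (z - 1) + 1 = z^2/2 + (z^3/2 + E * (z - 1)) := by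
    rw [hEdef]; ring
  have habs2 : ‖z^2/2‖ = r^2/2 := by
    rw [norm_div, norm_pow, Complex.norm_two]
  have habs3 : ‖z^3/2‖ = r^3/2 := by
    rw [norm_div, norm_pow, Complex.norm_two]
  have hz1abs : ‖z - 1‖ ≤ 3/2 := by
    calc ‖z - 1‖ ≤ ‖z‖ + ‖1‖ := norm_sub_le z 1
    _ ≤ 3/2 := by rw [norm_one]; linarith
  have ht : ‖z^3/2 + E * (z - 1)‖ ≤ r^3/2 + 2/9 * r^3 * (3/2) := by
    calc ‖z^3/2 + E * (z - 1)‖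
        ≤ ‖z^3/2‖ + ‖E * (z - 1)‖ := norm_add_le _ _
      _ = r^3/2 + ‖E‖ * ‖z - 1‖ := by rw [habs3, norm_mul]
      _ ≤ r^3/2 + 2/9 * r^3 * (3/2) := by gcongr
  have hr3 : r^3 ≤ r^2 * (1/2) := by
    have h : r^3 = r^2 * r := by ring
    rw [h]
    gcongr
  constructor
  · have h1 : ‖z^2/2‖ ≤
        ‖Complex.exp z * (z - 1) + 1‖ + ‖z^3/2 + E * (z - 1)‖ := by
      have h2 : (z^2/2 : ℂ) = (Complex.exp z * (z - 1) + 1) - (z^3/2 + E * (z - 1)) := by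
        rw [key]; ring
      rw [h2]
      exact norm_sub_le _ _
    rw [habs2] at h1
    nlinarith
  · rw [key]
    calc ‖z^2/2 + (z^3/2 + E * (z - 1))‖
        ≤ ‖z^2/2‖ + ‖z^3/2 + E * (z - 1)‖ := norm_add_le _ _
      _ ≤ r^2/2 + (r^3/2 + 2/9 * r^3 * (3/2)) := by rw [habs2]; linarith
      _ ≤ r^2 := by nlinarith

lemma fa_zero (a : ℂ) : fa a 0 = 0 := by
  simp [fa, Complex.exp_zero]

lemma fa_continuous (a : ℂ) : Continuous (fa a) := by
  unfold fa; continuity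

lemma abs_fa (a z : ℂ) :
    ‖fa a z‖ = ‖a‖ * ‖Complex.exp z * (z - 1) + 1‖ := by
  rw [fa, norm_mul]

set_option maxHeartbeats 1600000 in
theorem mainHypComp_bounded :
    ∃ R : ℝ, 0 < R ∧ ∀ a ∈ mainHypComp, ‖a‖ ≤ R := by
  refine ⟨48, by norm_num, ?_⟩
  rintro a ⟨ha0, hmem⟩
  by_contra hbig
  push_neg at hbig
  set A := ‖a‖ with hA
  have hA48 : 48 < A := hbig
  have hA0 : 0 < A := by linarith
  set δ : ℝ := 1 / (2 * A) with hδdef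
  have hδpos : 0 < δ := by positivity
  have hδhalf : δ < 1/2 := by
    rw [hδdef, div_lt_div_iff₀ (by positivity) (by norm_num)]
    linarith
  -- contraction on the small disk
  have hcontr : ∀ w : ℂ, ‖w‖ ≤ δ → ‖fa a w‖ ≤ ‖w‖ / 2 := by
    intro w hw
    have hw2 : ‖w‖ ≤ 1/2 := le_trans hw (le_of_lt hδhalf)
    have hup := (g_bounds w hw2).2
    have hAw : A * ‖w‖ ≤ 1/2 := by
      calc A * ‖w‖ ≤ A * (1/(2*A)) := by gcongr
        _ = 1/2 := by field_simp
    calc ‖fa a w‖ = A * ‖Complex.exp w * (w - 1) + 1‖ := abs_fa a w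
      _ ≤ A * (‖w‖ ^ 2) := by gcongr
      _ = (A * ‖w‖) * ‖w‖ := by ring
      _ ≤ (1/2) * ‖w‖ := by gcongr
      _ = ‖w‖ / 2 := by ring
  -- iterates shrink geometrically on the small disk
  have hiter : ∀ w : ℂ, ‖w‖ ≤ δ → ∀ k : ℕ,
      ‖(fa a)^[k] w‖ ≤ ‖w‖ / 2 ^ k := by
    intro w hw k
    induction k with
    | zero => simp
    | succ k ih =>
      have h21 : (1:ℝ) ≤ 2 ^ k := one_le_pow₀ (by norm_num : (1:ℝ) ≤ 2)
      have hwk : ‖(fa a)^[k] w‖ ≤ δ := by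
        refine le_trans ih (le_trans ?_ hw)
        calc ‖w‖ / 2 ^ k ≤ ‖w‖ / 1 := by gcongr
          _ = ‖w‖ := by ring
      rw [Function.iterate_succ_apply']
      calc ‖fa a ((fa a)^[k] w)‖ ≤ ‖(fa a)^[k] w‖ / 2 := hcontr _ hwk
        _ ≤ (‖w‖ / 2 ^ k) / 2 := by linarith
        _ = ‖w‖ / 2 ^ (k+1) := by ring
  -- the small disk is inside the basin
  have hbasin_small : ∀ w : ℂ, ‖w‖ ≤ δ → w ∈ basin a := by
    intro w hw
    have hb : ∀ k, ‖(fa a)^[k] w‖ ≤ ‖w‖ * (1/2)^k := by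
      intro k
      calc ‖(fa a)^[k] w‖ ≤ ‖w‖ / 2 ^ k := hiter w hw k
        _ = ‖w‖ * (1/2)^k := by rw [div_pow, one_pow]; ring
    have hg : Tendsto (fun k => ‖w‖ * (1/2:ℝ)^k) atTop (nhds 0) := by
      have h := tendsto_pow_atTop_nhds_zero_of_lt_one (by norm_num : (0:ℝ) ≤ 1/2)
        (by norm_num : (1/2:ℝ) < 1)
      simpa using h.const_mul (‖w‖)
    exact squeeze_zero_norm hb hg
  -- the basin is open
  have hVopen : ∀ n : ℕ, IsOpen ((fa a)^[n] ⁻¹' Metric.ball (0:ℂ) δ) := fun n =>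
    ((fa_continuous a).iterate n).isOpen_preimage _ Metric.isOpen_ball
  have hbasin_sub : basin a ⊆ ⋃ n, (fa a)^[n] ⁻¹' Metric.ball (0:ℂ) δ := by
    intro w hw
    simp only [basin, Set.mem_setOf_eq] at hw
    have hev : ∀ᶠ n in atTop, (fa a)^[n] w ∈ Metric.ball (0:ℂ) δ :=
      hw.eventually (eventually_mem_set.mpr (Metric.ball_mem_nhds 0 hδpos))
    obtain ⟨n, hn⟩ := hev.exists
    exact Set.mem_iUnion.mpr ⟨n, hn⟩
  have hsub_basin : (⋃ n, (fa a)^[n] ⁻¹' Metric.ball (0:ℂ) δ) ⊆ basin a := by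
    intro w hw
    obtain ⟨n, hn⟩ := Set.mem_iUnion.mp hw
    have hwn : ‖(fa a)^[n] w‖ ≤ δ := by
      simp only [Set.mem_preimage, Metric.mem_ball, Complex.dist_eq, sub_zero] at hn
      exact hn.le
    have hb : (fa a)^[n] w ∈ basin a := hbasin_small _ hwn
    simp only [basin, Set.mem_setOf_eq] at hb ⊢
    rw [← tendsto_add_atTop_iff_nat n]
    convert hb using 2 with k
    exact Function.iterate_add_apply (fa a) k n w
  have hbasin_eq : basin a = ⋃ n, (fa a)^[n] ⁻¹' Metric.ball (0:ℂ) δ :=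
    Set.Subset.antisymm hbasin_sub hsub_basin
  have hopen : IsOpen (basin a) := hbasin_eq ▸ isOpen_iUnion hVopen
  -- the immediate basin is open, connected, path connected
  have h0basin : (0:ℂ) ∈ basin a := by
    have hfix : ∀ n, (fa a)^[n] (0:ℂ) = 0 := fun n => Function.iterate_fixed (fa_zero a) n
    simp only [basin, Set.mem_setOf_eq, hfix]
    exact tendsto_const_nhds
  have hUopen : IsOpen (immediateBasin a) := hopen.connectedComponentIn
  have hUconn : IsConnected (immediateBasin a) := isConnected_connectedComponentIn_iff.mpr h0basin
  have hUpath : IsPathConnected (immediateBasin a) :=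
    hUopen.isConnected_iff_isPathConnected.mp hUconn
  have h0U : (0:ℂ) ∈ immediateBasin a := mem_connectedComponentIn h0basin
  obtain ⟨γ, hγ⟩ := hUpath.joinedIn 0 h0U a hmem
  set K : Set ℂ := Set.range γ with hK
  have hKcomp : IsCompact K := isCompact_range γ.continuous
  have hKconn : IsPreconnected K := isPreconnected_range γ.continuous
  have hKsub : K ⊆ basin a := by
    rintro w ⟨t, rfl⟩
    exact connectedComponentIn_subset _ _ (hγ t)
  have h0K : (0:ℂ) ∈ K := ⟨0, γ.source⟩
  have haK : a ∈ K := ⟨1, γ.target⟩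
  -- a uniform time at which the whole path is inside the small disk
  obtain ⟨s, hs⟩ := hKcomp.elim_finite_subcover _ hVopen (hKsub.trans hbasin_sub)
  set N : ℕ := s.sup id with hN
  have huniform : ∀ w ∈ K, ‖(fa a)^[N] w‖ < δ := by
    intro w hw
    obtain ⟨n, hns, hn⟩ := Set.mem_iUnion₂.mp (hs hw)
    have hnN : n ≤ N := Finset.le_sup (f := id) hns
    obtain ⟨k, hk⟩ : ∃ k, N = k + n := ⟨N - n, by omega⟩
    have hwn : ‖(fa a)^[n] w‖ < δ := by
      simpa only [Set.mem_preimage, Metric.mem_ball, Complex.dist_eq, sub_zero] using hn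
    have h21 : (1:ℝ) ≤ 2 ^ k := one_le_pow₀ (by norm_num : (1:ℝ) ≤ 2)
    rw [hk, Function.iterate_add_apply]
    calc ‖(fa a)^[k] ((fa a)^[n] w)‖ ≤ ‖(fa a)^[n] w‖ / 2 ^ k :=
          hiter _ hwn.le k
      _ ≤ ‖(fa a)^[n] w‖ / 1 := by gcongr
      _ < δ := by rw [div_one]; exact hwn
  -- but at each time, some point of the path has large image
  have hclaim : ∀ n : ℕ, ∃ w ∈ K, 1/2 < ‖(fa a)^[n] w‖ := by
    intro n
    induction n with
    | zero =>
      refine ⟨a, haK, ?_⟩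
      simpa using (by linarith : (1:ℝ)/2 < A)
    | succ n ih =>
      obtain ⟨w, hwK, hw⟩ := ih
      have hcont : ContinuousOn (fun u => ‖(fa a)^[n] u‖) K :=
        (continuous_norm.comp ((fa_continuous a).iterate n)).continuousOn
      have hIcc : (1/2 : ℝ) ∈
          Set.Icc ((fun u => ‖(fa a)^[n] u‖) (0:ℂ))
            ((fun u => ‖(fa a)^[n] u‖) w) := by
        simp only [Function.iterate_fixed (fa_zero a) n, norm_zero]
        exact ⟨by norm_num, hw.le⟩
      obtain ⟨u, huK, hu⟩ := hKconn.intermediate_value h0K hwK hcont hIcc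
      refine ⟨u, huK, ?_⟩
      simp only at hu
      rw [Function.iterate_succ_apply', abs_fa]
      have hlow := (g_bounds ((fa a)^[n] u) (by rw [hu])).1
      rw [hu] at hlow
      calc (1/2:ℝ) < A * ((1/2)^2/12) := by nlinarith
        _ ≤ A * ‖Complex.exp ((fa a)^[n] u) * ((fa a)^[n] u - 1) + 1‖ := by gcongr
  obtain ⟨w, hwK, hw⟩ := hclaim N
  have := huniform w hwK
  linarith
end

section
/- Let (U_n, u_n) be pointed domains with u_n → u, and suppose that for every subsequence such that the complements K_{n_k} = Ĉ \ U_{n_k} converge in the Hausdorff metric on compact subsets of the Riemann sphere to some compact set K, the set U is the connected component of Ĉ \ K containing u. Then (U_n, u_n) converges to (U, u) in the sense of Carathéodory, and conversely. -/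
open Filter Metric

/-- Carathéodory convergence of a sequence of pointed domains `(U n, u n)` to `(V, v)`. -/
def CaraConv (U : ℕ → Set ℂ) (u : ℕ → ℂ) (V : Set ℂ) (v : ℂ) : Prop :=
  Tendsto u atTop (nhds v) ∧
  (∀ C : Set ℂ, C ⊆ V → IsCompact C → ∀ᶠ n in atTop, C ⊆ U n) ∧
  (∀ N : Set ℂ, IsOpen N → IsConnected N → v ∈ N →
    (∃ᶠ n in atTop, N ⊆ U n) → N ⊆ V)

namespace CaraAux

variable {X : Type*} [MetricSpace X] [CompactSpace X]

lemma bounded_all (s : Set X) : Bornology.IsBounded s :=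
  isCompact_univ.isBounded.subset (Set.subset_univ _)

lemma edist_ne_top {s t : Set X} (hs : s.Nonempty) (ht : t.Nonempty) :
    EMetric.hausdorffEdist s t ≠ ⊤ :=
  Metric.hausdorffEdist_ne_top_of_nonempty_of_bounded hs ht (bounded_all s) (bounded_all t)

/-- If a compact set `C` is disjoint from the Hausdorff limit `K` of the sets `A k`,
then `C` is eventually disjoint from `A k`. -/
lemma eventually_subset_compl {K : Set X} (hKc : IsCompact K) (hKne : K.Nonempty)
    {A : ℕ → Set X} (hAne : ∀ k, (A k).Nonempty)
    (h : Tendsto (fun k => hausdorffDist (A k) K) atTop (nhds 0))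
    {C : Set X} (hC : IsCompact C) (hdisj : C ⊆ Kᶜ) :
    ∀ᶠ k in atTop, C ⊆ (A k)ᶜ := by
  obtain ⟨δ, δpos, hδ⟩ := hKc.exists_thickening_subset_open hC.isClosed.isOpen_compl
    (fun y hy hyC => hdisj hyC hy)
  filter_upwards [h.eventually (gt_mem_nhds δpos)] with k hk
  intro y hyC hyA
  obtain ⟨b, hb, hdb⟩ := Metric.exists_dist_lt_of_hausdorffDist_lt hyA hk
    (edist_ne_top (hAne k) hKne)
  exact hδ (Metric.mem_thickening_iff.2 ⟨b, hb, hdb⟩) hyC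

/-- If a fixed ball around `x` is eventually disjoint from `A k`, then `x` is not in the
Hausdorff limit `K` of the sets `A k`. -/
lemma not_mem_limit {K : Set X} (hKne : K.Nonempty)
    {A : ℕ → Set X} (hAne : ∀ k, (A k).Nonempty)
    (h : Tendsto (fun k => hausdorffDist (A k) K) atTop (nhds 0))
    {x : X} {r : ℝ} (hr : 0 < r) (hball : ∀ᶠ k in atTop, ball x r ⊆ (A k)ᶜ) :
    x ∉ K := by
  intro hx
  have h1 : ∀ᶠ k in atTop, r ≤ hausdorffDist (A k) K := by
    filter_upwards [hball] with k hk
    have h2 : r ≤ infDist x (A k) := by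
      by_contra hlt
      push_neg at hlt
      obtain ⟨y, hy, hdy⟩ := (Metric.infDist_lt_iff (hAne k)).1 hlt
      exact hk (Metric.mem_ball'.2 hdy) hy
    have h3 : infDist x (A k) ≤ hausdorffDist K (A k) :=
      Metric.infDist_le_hausdorffDist_of_mem hx (edist_ne_top hKne (hAne k))
    rw [Metric.hausdorffDist_comm] at h3
    linarith
  obtain ⟨k, hk1, hk2⟩ := (h1.and (h.eventually (gt_mem_nhds hr))).exists
  linarith

/-- The thickening of a preconnected set in `ℂ` is preconnected. -/
lemma isPreconnected_thickening {C : Set ℂ} (hC : IsPreconnected C) {δ : ℝ} (hδ : 0 < δ) :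
    IsPreconnected (Metric.thickening δ C) := by
  rcases C.eq_empty_or_nonempty with rfl | ⟨x₀, hx₀⟩
  · simp [Metric.thickening_empty, isPreconnected_empty]
  · have key : Metric.thickening δ C = ⋃₀ ((fun y => C ∪ ball y δ) '' C) := by
      rw [Metric.thickening_eq_biUnion_ball, Set.sUnion_image]
      ext z
      simp only [Set.mem_iUnion, Set.mem_union]
      constructor
      · rintro ⟨y, hy, hz⟩; exact ⟨y, hy, Or.inr hz⟩
      · rintro ⟨y, hy, hz | hz⟩
        · exact ⟨z, hz, mem_ball_self hδ⟩
        · exact ⟨y, hy, hz⟩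
    rw [key]
    apply isPreconnected_sUnion x₀
    · rintro s ⟨y, hy, rfl⟩; exact Or.inl hx₀
    · rintro s ⟨y, hy, rfl⟩
      exact IsPreconnected.union y hy (mem_ball_self hδ) hC ((convex_ball y δ).isPreconnected)

/-- Around a compact preconnected subset `C` of an open set `Ω ⊆ ℂ` one can find an open
preconnected neighbourhood `N` with compact "closure" `C₂` still inside `Ω`. -/
lemma exists_nbhd {Ω : Set ℂ} (hΩ : IsOpen Ω) {C : Set ℂ} (hCc : IsCompact C)
    (hCp : IsPreconnected C) (hsub : C ⊆ Ω) :
    ∃ N C₂ : Set ℂ, IsOpen N ∧ IsPreconnected N ∧ C ⊆ N ∧ N ⊆ C₂ ∧ IsCompact C₂ ∧ C₂ ⊆ Ω := by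
  obtain ⟨δ, δpos, hδ⟩ := hCc.exists_thickening_subset_open hΩ hsub
  exact ⟨Metric.thickening (δ / 2) C, Metric.cthickening (δ / 2) C, Metric.isOpen_thickening,
    isPreconnected_thickening hCp (by linarith), Metric.self_subset_thickening (by linarith) C,
    Metric.thickening_subset_cthickening _ _, hCc.cthickening,
    (Metric.cthickening_subset_thickening' δpos (by linarith) C).trans hδ⟩

end CaraAux

open CaraAux Topology OnePoint

/-- Carathéodory convergence is equivalent to the Hausdorff convergence of the complements
in the Riemann sphere (modelled as a compact metric space `X` homeomorphic to `OnePoint ℂ`):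
for every subsequence whose complements converge in the Hausdorff metric to a compact set `K`,
the limit domain `V` is the connected component of the complement of `K` containing `v`. -/
theorem caraConv_iff_hausdorff
    (X : Type*) [MetricSpace X] [CompactSpace X] (φ : OnePoint ℂ ≃ₜ X)
    (U : ℕ → Set ℂ) (u : ℕ → ℂ) (V : Set ℂ) (v : ℂ)
    (hUopen : ∀ n, IsOpen (U n)) (hUconn : ∀ n, IsConnected (U n)) (hun : ∀ n, u n ∈ U n)
    (hVopen : IsOpen V) (hVconn : IsConnected V) (hv : v ∈ V) :
    CaraConv U u V v ↔
      (Tendsto u atTop (nhds v) ∧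
        ∀ (s : ℕ → ℕ), StrictMono s → ∀ K : Set X, IsCompact K → K.Nonempty →
          Tendsto
            (fun k => hausdorffDist (φ '' (((fun z : ℂ => (z : OnePoint ℂ)) '' U (s k))ᶜ)) K)
            atTop (nhds 0) →
          (fun z : ℂ => φ (z : OnePoint ℂ)) '' V = connectedComponentIn Kᶜ (φ (v : OnePoint ℂ))) := by
  set e : ℂ → X := fun z : ℂ => φ (z : OnePoint ℂ) with he_def
  have heo : IsOpenEmbedding e := φ.isOpenEmbedding.comp OnePoint.isOpenEmbedding_coe
  have heinj : Function.Injective e := heo.injective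
  have hcompl : ∀ S : Set ℂ,
      φ '' (((fun z : ℂ => (z : OnePoint ℂ)) '' S)ᶜ) = (e '' S)ᶜ := by
    intro S
    rw [Set.image_compl_eq φ.bijective, Set.image_image]
  have hAopen : ∀ n, IsOpen (e '' U n) := fun n => heo.isOpenMap _ (hUopen n)
  have hAcomp : ∀ n, IsCompact ((e '' U n)ᶜ) := fun n =>
    ((hAopen n).isClosed_compl).isCompact
  have hAne : ∀ n, ((e '' U n)ᶜ).Nonempty := by
    intro n
    refine ⟨φ ∞, ?_⟩
    rintro ⟨z, hz, hzz⟩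
    exact OnePoint.coe_ne_infty z (φ.injective hzz)
  constructor
  · -- Carathéodory convergence implies the Hausdorff condition
    rintro ⟨h1, h2, h3⟩
    refine ⟨h1, ?_⟩
    intro s hs K hKc hKne hdist
    simp only [hcompl] at hdist
    -- every point of `V` maps outside `K`
    have hVK : ∀ x ∈ V, e x ∉ K := by
      intro x hx
      obtain ⟨ε, εpos, hε⟩ := Metric.isOpen_iff.1 hVopen x hx
      have hcb : closedBall x (ε / 2) ⊆ V :=
        (Metric.closedBall_subset_ball (by linarith)).trans hε
      have hev : ∀ᶠ n in atTop, closedBall x (ε / 2) ⊆ U n :=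
        h2 _ hcb (isCompact_closedBall x _)
      have hxball : e x ∈ e '' ball x (ε / 2) :=
        ⟨x, mem_ball_self (by linarith), rfl⟩
      obtain ⟨r, rpos, hrball⟩ :=
        Metric.isOpen_iff.1 (heo.isOpenMap _ Metric.isOpen_ball) _ hxball
      refine not_mem_limit hKne (fun k => hAne (s k)) hdist rpos ?_
      filter_upwards [hs.tendsto_atTop.eventually hev] with k hk
      have hsubs : ball (e x) r ⊆ e '' U (s k) :=
        hrball.trans (Set.image_mono (f := e) (Metric.ball_subset_closedBall.trans hk))
      simpa using hsubs
    have hev_mem : e v ∈ Kᶜ := hVK v hv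
    -- forward inclusion
    have himg : e '' V ⊆ connectedComponentIn Kᶜ (e v) := by
      refine IsPreconnected.subset_connectedComponentIn ?_ ⟨v, hv, rfl⟩ ?_
      · exact (hVconn.image e heo.continuous.continuousOn).isPreconnected
      · rintro y ⟨x, hx, rfl⟩; exact hVK x hx
    -- the complement of `K` lies in the range of `e`
    have hinfmem : ∀ n, φ ∞ ∈ (e '' U n)ᶜ := by
      intro n
      rintro ⟨z, hz, hzz⟩
      exact OnePoint.coe_ne_infty z (φ.injective hzz)
    have hinf : φ ∞ ∈ K := by
      have hle : infDist (φ ∞) K ≤ 0 := by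
        refine ge_of_tendsto' hdist fun k => ?_
        exact Metric.infDist_le_hausdorffDist_of_mem (hinfmem (s k))
          (edist_ne_top (hAne (s k)) hKne)
      exact (hKc.isClosed.mem_iff_infDist_zero hKne).2
        (le_antisymm hle Metric.infDist_nonneg)
    have hKrange : Kᶜ ⊆ Set.range e := by
      intro y hy
      obtain ⟨w, rfl⟩ := φ.surjective y
      induction w using OnePoint.rec with
      | infty => exact absurd hinf hy
      | coe z => exact ⟨z, rfl⟩
    -- the preimage component
    have hpreo : IsOpen (e ⁻¹' Kᶜ) := hKc.isClosed.isOpen_compl.preimage heo.continuous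
    set Ω : Set ℂ := connectedComponentIn (e ⁻¹' Kᶜ) v with hΩ_def
    have hvΩmem : v ∈ e ⁻¹' Kᶜ := hev_mem
    have hΩopen : IsOpen Ω := hpreo.connectedComponentIn
    have hΩconn : IsConnected Ω := isConnected_connectedComponentIn_iff.2 hvΩmem
    have hΩsub : Ω ⊆ e ⁻¹' Kᶜ := connectedComponentIn_subset _ _
    -- the component is contained in `e '' Ω`
    have hWΩ : connectedComponentIn Kᶜ (e v) ⊆ e '' Ω := by
      have hWrange : connectedComponentIn Kᶜ (e v) ⊆ Set.range e :=
        (connectedComponentIn_subset _ _).trans hKrange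
      have hWpre : IsPreconnected (e ⁻¹' connectedComponentIn Kᶜ (e v)) :=
        (isConnected_connectedComponentIn_iff.2 hev_mem).isPreconnected.preimage_of_isOpenMap
          heinj heo.isOpenMap hWrange
      have hsub2 : e ⁻¹' connectedComponentIn Kᶜ (e v) ⊆ Ω := by
        refine IsPreconnected.subset_connectedComponentIn hWpre ?_ ?_
        · exact mem_connectedComponentIn hev_mem
        · exact Set.preimage_mono (connectedComponentIn_subset _ _)
      intro y hy
      obtain ⟨z, rfl⟩ := hWrange hy
      exact ⟨z, hsub2 hy, rfl⟩
    -- `Ω ⊆ V`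
    have hΩV : Ω ⊆ V := by
      intro x hx
      have hpath : IsPathConnected Ω := (hΩopen.isConnected_iff_isPathConnected.1 hΩconn)
      obtain ⟨γ, hγ⟩ := hpath.joinedIn v (mem_connectedComponentIn hvΩmem) x hx
      have hCc : IsCompact (Set.range γ) := isCompact_range γ.continuous
      have hCp : IsPreconnected (Set.range γ) := isPreconnected_range γ.continuous
      have hCsub : Set.range γ ⊆ Ω := Set.range_subset_iff.2 hγ
      obtain ⟨N, C₂, hNopen, hNpre, hCN, hNC₂, hC₂c, hC₂Ω⟩ :=
        exists_nbhd hΩopen hCc hCp hCsub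
      have hvN : v ∈ N := hCN ⟨0, γ.source⟩
      have hxN : x ∈ N := hCN ⟨1, γ.target⟩
      have hC₂K : e '' C₂ ⊆ Kᶜ := by
        rintro y ⟨z, hz, rfl⟩
        exact hΩsub (hC₂Ω hz)
      have hevk : ∀ᶠ k in atTop, C₂ ⊆ U (s k) := by
        have := eventually_subset_compl hKc hKne (fun k => hAne (s k)) hdist
          (hC₂c.image heo.continuous) hC₂K
        filter_upwards [this] with k hk
        rw [← Set.image_subset_image_iff heinj]
        intro y hy
        have := hk hy
        simpa using this
      have hfreq : ∃ᶠ n in atTop, N ⊆ U n :=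
        hs.tendsto_atTop.frequently
          ((hevk.mono fun k hk => hNC₂.trans hk).frequently)
      exact (h3 N hNopen ⟨⟨v, hvN⟩, hNpre⟩ hvN hfreq) hxN
    -- conclusion
    refine subset_antisymm himg ?_
    exact hWΩ.trans ((Set.image_mono (f := e) hΩV).trans (subset_refl _))
  · -- the Hausdorff condition implies Carathéodory convergence
    rintro ⟨h1, hyp⟩
    refine ⟨h1, ?_, ?_⟩
    · -- compact subsets are eventually contained
      intro C hCV hCc
      by_contra hcon
      rw [Filter.not_eventually] at hcon
      obtain ⟨s, hs, hsP⟩ := Filter.extraction_of_frequently_atTop hcon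
      obtain ⟨L, -, t, ht, hconv⟩ := isCompact_univ.tendsto_subseq
        (x := fun k => (⟨⟨(e '' U (s k))ᶜ, hAcomp (s k)⟩, hAne (s k)⟩ :
          TopologicalSpace.NonemptyCompacts X))
        (fun k => Set.mem_univ _)
      have hdist : Tendsto (fun k => hausdorffDist ((e '' U (s (t k)))ᶜ) (L : Set X))
          atTop (nhds 0) := by
        have := tendsto_iff_dist_tendsto_zero.1 hconv
        simpa [Function.comp_def, Metric.NonemptyCompacts.dist_eq] using this
      have heq := hyp (s ∘ t) (hs.comp ht) (L : Set X) L.isCompact L.nonempty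
        (by simpa only [Function.comp_apply, hcompl] using hdist)
      have hCL : e '' C ⊆ (L : Set X)ᶜ := by
        refine (Set.image_mono (f := e) hCV).trans ?_
        rw [heq]
        exact connectedComponentIn_subset _ _
      have hev := eventually_subset_compl L.isCompact L.nonempty
        (fun k => hAne (s (t k))) hdist (hCc.image heo.continuous) hCL
      obtain ⟨k, hk⟩ := hev.exists
      refine hsP (t k) ?_
      rw [← Set.image_subset_image_iff heinj]
      intro y hy
      simpa using hk hy
    · -- kernel property
      intro N hNopen hNconn hvN hfreq
      obtain ⟨s, hs, hsP⟩ := Filter.extraction_of_frequently_atTop hfreq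
      obtain ⟨L, -, t, ht, hconv⟩ := isCompact_univ.tendsto_subseq
        (x := fun k => (⟨⟨(e '' U (s k))ᶜ, hAcomp (s k)⟩, hAne (s k)⟩ :
          TopologicalSpace.NonemptyCompacts X))
        (fun k => Set.mem_univ _)
      have hdist : Tendsto (fun k => hausdorffDist ((e '' U (s (t k)))ᶜ) (L : Set X))
          atTop (nhds 0) := by
        have := tendsto_iff_dist_tendsto_zero.1 hconv
        simpa [Function.comp_def, Metric.NonemptyCompacts.dist_eq] using this
      have heq := hyp (s ∘ t) (hs.comp ht) (L : Set X) L.isCompact L.nonempty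
        (by simpa only [Function.comp_apply, hcompl] using hdist)
      have hNL : ∀ x ∈ N, e x ∉ (L : Set X) := by
        intro x hx
        have hxball : e x ∈ e '' N := ⟨x, hx, rfl⟩
        obtain ⟨r, rpos, hrball⟩ :=
          Metric.isOpen_iff.1 (heo.isOpenMap _ hNopen) _ hxball
        refine not_mem_limit L.nonempty (fun k => hAne (s (t k))) hdist rpos ?_
        refine Eventually.of_forall fun k => ?_
        have hsubs : ball (e x) r ⊆ e '' U (s (t k)) :=
          hrball.trans (Set.image_mono (f := e) (hsP (t k)))
        simpa using hsubs
      have hNin : e '' N ⊆ connectedComponentIn (L : Set X)ᶜ (φ (v : OnePoint ℂ)) := by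
        refine IsPreconnected.subset_connectedComponentIn ?_ ⟨v, hvN, rfl⟩ ?_
        · exact (hNconn.image e heo.continuous.continuousOn).isPreconnected
        · rintro y ⟨x, hx, rfl⟩; exact hNL x hx
      rw [← heq] at hNin
      intro x hx
      obtain ⟨x', hx', hee⟩ := hNin ⟨x, hx, rfl⟩
      rwa [← heinj hee]
end

section
/- A sequence of pointed domains (U_n, u_n) with u_n ∈ U_n ⊊ ℂ is precompact in the Carathéodory topology on proper pointed subdomains of ℂ if and only if the sequence (u_n) is bounded and there exists L ∈ (1, ∞) such that 1/L ≤ dist(u_n, ∂U_n) ≤ L for all n, where dist denotes Euclidean distance. -/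
open Filter Metric Set Topology
open scoped ENNReal

namespace CaraAux

noncomputable def phi (z : ℂ) : ℂ := (1 + ‖z‖)⁻¹ • z

noncomputable def psi (w : ℂ) : ℂ := (1 - ‖w‖)⁻¹ • w

lemma one_add_norm_pos (z : ℂ) : (0:ℝ) < 1 + ‖z‖ := by positivity

lemma norm_phi (z : ℂ) : ‖phi z‖ = ‖z‖ / (1 + ‖z‖) := by
  rw [phi, norm_smul, norm_inv, Real.norm_eq_abs, abs_of_pos (one_add_norm_pos z)]
  ring

lemma norm_phi_lt_one (z : ℂ) : ‖phi z‖ < 1 := by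
  rw [norm_phi]
  rw [div_lt_one (one_add_norm_pos z)]
  linarith

lemma psi_phi (z : ℂ) : psi (phi z) = z := by
  have h1 : (1:ℝ) - ‖phi z‖ = (1 + ‖z‖)⁻¹ := by
    rw [norm_phi]
    field_simp
    ring
  rw [psi, h1, inv_inv, phi, smul_smul, mul_inv_cancel₀ (one_add_norm_pos z).ne', one_smul]

lemma continuous_phi : Continuous phi := by
  apply Continuous.fun_smul
  · exact ((continuous_const.add continuous_norm).inv₀ (fun z => (one_add_norm_pos z).ne'))
  · exact continuous_id

lemma continuousAt_psi {w : ℂ} (h : ‖w‖ < 1) : ContinuousAt psi w := by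
  apply ContinuousAt.fun_smul
  · exact ((continuousAt_const.sub continuous_norm.continuousAt).inv₀ (sub_ne_zero.mpr h.ne'))
  · exact continuousAt_id

lemma ball_subset_of_infDist {Uu : Set ℂ} (hU : IsOpen Uu) {x : ℂ} (hx : x ∈ Uu) {r : ℝ}
    (hr : r ≤ infDist x (frontier Uu)) : ball x r ⊆ Uu := by
  rcases le_or_gt r 0 with h | h
  · simp [ball_eq_empty.2 h]
  · have hsub : ball x r ⊆ Uu ∪ (closure Uu)ᶜ := by
      intro y hy
      by_cases hyc : y ∈ closure Uu
      · left
        by_contra hyU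
        have hyf : y ∈ frontier Uu := by
          rw [hU.frontier_eq]; exact ⟨hyc, hyU⟩
        have h1 : infDist x (frontier Uu) ≤ dist x y := Metric.infDist_le_dist_of_mem hyf
        rw [Metric.mem_ball'] at hy
        linarith
      · right; exact hyc
    exact (convex_ball x r).isPreconnected.subset_left_of_subset_union hU
      isClosed_closure.isOpen_compl (disjoint_compl_right.mono_left subset_closure) hsub
      ⟨x, mem_ball_self h, hx⟩

lemma le_infDist_frontier_of_ball_subset {Uu : Set ℂ} (hU : IsOpen Uu)
    (hfr : (frontier Uu).Nonempty) {x : ℂ} {r : ℝ} (h : ball x r ⊆ Uu) :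
    r ≤ infDist x (frontier Uu) := by
  by_contra hc
  push_neg at hc
  obtain ⟨y, hy, hyd⟩ := (Metric.infDist_lt_iff hfr).mp hc
  have hyU : y ∈ Uu := h (by rwa [Metric.mem_ball'])
  rw [hU.frontier_eq] at hy
  exact hy.2 hyU

lemma freq_gt_of_not_bddAbove {f : ℕ → ℝ} (h : ¬ ∃ M, ∀ n, f n ≤ M) (m : ℝ) :
    ∃ᶠ n in atTop, m < f n := by
  by_contra hc
  rw [Filter.not_frequently] at hc
  obtain ⟨N, hN⟩ := Filter.eventually_atTop.mp hc
  apply h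
  classical
  refine ⟨max m ((insert m ((Finset.range N).image f)).max' ⟨m, Finset.mem_insert_self _ _⟩),
    fun n => ?_⟩
  rcases lt_or_ge n N with h1 | h1
  · exact le_max_of_le_right (Finset.le_max' _ _
      (Finset.mem_insert_of_mem (Finset.mem_image_of_mem f (Finset.mem_range.mpr h1))))
  · exact le_max_of_le_left (not_lt.mp (by simpa using hN n h1))

lemma freq_lt_of_not_bddBelow {f : ℕ → ℝ} (hpos : ∀ n, 0 < f n)
    (h : ¬ ∃ c, 0 < c ∧ ∀ n, c ≤ f n) (m : ℕ) :
    ∃ᶠ n in atTop, f n < 1/((m:ℝ)+1) := by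
  by_contra hc
  rw [Filter.not_frequently] at hc
  obtain ⟨N, hN⟩ := Filter.eventually_atTop.mp hc
  apply h
  classical
  set F := insert (1/((m:ℝ)+1)) ((Finset.range N).image f) with hF
  have hFne : F.Nonempty := ⟨_, Finset.mem_insert_self _ _⟩
  refine ⟨F.min' hFne, ?_, fun n => ?_⟩
  · have hmem := F.min'_mem hFne
    rcases Finset.mem_insert.mp hmem with h' | h'
    · rw [h']; positivity
    · obtain ⟨i, _, hi⟩ := Finset.mem_image.mp h'
      rw [← hi]; exact hpos i
  · rcases lt_or_ge n N with h1 | h1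
    · exact Finset.min'_le _ _
        (Finset.mem_insert_of_mem (Finset.mem_image_of_mem f (Finset.mem_range.mpr h1)))
    · exact le_trans (Finset.min'_le _ _ (Finset.mem_insert_self _ _))
        (not_lt.mp (by simpa using hN n h1))


def Xc : Set ℂ := Metric.closedBall 0 1

instance : CompactSpace Xc := isCompact_iff_compactSpace.mp (isCompact_closedBall _ _)

noncomputable def phiX (z : ℂ) : Xc :=
  ⟨phi z, by rw [Xc, Metric.mem_closedBall, dist_zero_right]; exact (norm_phi_lt_one z).le⟩

lemma continuous_phiX : Continuous phiX := continuous_phi.subtype_mk _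

end CaraAux

open CaraAux

/-- Precompactness in the Carathéodory topology on pointed proper subdomains of ℂ:
every subsequence has a subsubsequence converging to a pointed proper subdomain. -/
def CaraPrecompact (U : ℕ → Set ℂ) (u : ℕ → ℂ) : Prop :=
  ∀ s : ℕ → ℕ, StrictMono s → ∃ t : ℕ → ℕ, StrictMono t ∧
    ∃ (V : Set ℂ) (v : ℂ), IsOpen V ∧ IsConnected V ∧ V ≠ Set.univ ∧ v ∈ V ∧
      CaraConv (fun k => U (s (t k))) (fun k => u (s (t k))) V v

theorem caraPrecompact_iff (U : ℕ → Set ℂ) (u : ℕ → ℂ)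
    (hUopen : ∀ n, IsOpen (U n)) (hUconn : ∀ n, IsConnected (U n))
    (hUproper : ∀ n, U n ≠ Set.univ) (hun : ∀ n, u n ∈ U n) :
    CaraPrecompact U u ↔
      ((∃ M : ℝ, ∀ n, ‖u n‖ ≤ M) ∧
        ∃ L : ℝ, 1 < L ∧ ∀ n,
          1 / L ≤ infDist (u n) (frontier (U n)) ∧ infDist (u n) (frontier (U n)) ≤ L) := by
  have hfr : ∀ n, (frontier (U n)).Nonempty := fun n =>
    nonempty_frontier_iff.mpr ⟨⟨u n, hun n⟩, hUproper n⟩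
  constructor
  · intro h
    constructor
    · -- markings bounded
      by_contra hM
      obtain ⟨s, hs, hsP⟩ := Filter.extraction_forall_of_frequently
        (fun m : ℕ => freq_gt_of_not_bddAbove hM (m : ℝ))
      obtain ⟨t, ht, V, v, _, _, _, _, hconv⟩ := h s hs
      have h1 : Tendsto (fun k => ‖u (s (t k))‖) atTop atTop :=
        tendsto_atTop_mono
          (fun k => le_of_lt (lt_of_le_of_lt (Nat.cast_le.mpr (ht.le_apply)) (hsP (t k))))
          tendsto_natCast_atTop_atTop
      exact not_tendsto_nhds_of_tendsto_atTop h1 _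
        ((continuous_norm.tendsto v).comp hconv.1)
    · set d : ℕ → ℝ := fun n => infDist (u n) (frontier (U n)) with hd
      have hdpos : ∀ n, 0 < d n := fun n =>
        ((isClosed_frontier.notMem_iff_infDist_pos (hfr n)).mp
          (fun hmem => by
            have h2 := (hUopen n).frontier_eq ▸ hmem
            exact h2.2 (hun n)))
      have hA : ∃ L1, ∀ n, d n ≤ L1 := by
        by_contra hA
        obtain ⟨s, hs, hsP⟩ := Filter.extraction_forall_of_frequently
          (fun m : ℕ => freq_gt_of_not_bddAbove hA (m : ℝ))
        obtain ⟨t, ht, V, v, hVo, hVc, hVp, hvV, hconv⟩ := h s hs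
        obtain ⟨w, hw⟩ : ∃ w, w ∉ V := by
          by_contra hw
          push_neg at hw
          exact hVp (eq_univ_of_forall hw)
        set R := dist v w + 1 with hR
        have hR0 : 0 < R := by positivity
        have hNU : ∀ᶠ k in atTop, ball v R ⊆ U (s (t k)) := by
          have h1 : ∀ᶠ k in atTop, dist (u (s (t k))) v < 1 :=
            Metric.tendsto_nhds.mp hconv.1 1 one_pos
          have h2 : ∀ᶠ k in atTop, R + 1 ≤ d (s (t k)) := by
            filter_upwards [Filter.eventually_ge_atTop ⌈R + 1⌉₊] with k hk
            have h3 : R + 1 ≤ (t k : ℝ) := by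
              calc R + 1 ≤ (⌈R + 1⌉₊ : ℝ) := Nat.le_ceil _
              _ ≤ (t k : ℝ) := Nat.cast_le.mpr (le_trans hk ht.le_apply)
            exact le_trans h3 (le_of_lt (hsP (t k)))
          filter_upwards [h1, h2] with k hk1 hk2
          have hsub : ball v R ⊆ Metric.ball (u (s (t k))) (R + 1) := by
            intro y hy
            rw [Metric.mem_ball] at hy ⊢
            calc dist y (u (s (t k))) ≤ dist y v + dist v (u (s (t k))) := dist_triangle _ _ _
            _ < R + 1 := by rw [dist_comm v]; linarith
          exact hsub.trans (ball_subset_of_infDist (hUopen _) (hun _) hk2)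
        have hNV := hconv.2.2 (ball v R) isOpen_ball
          ⟨⟨v, mem_ball_self hR0⟩, (convex_ball v R).isPreconnected⟩
          (mem_ball_self hR0) hNU.frequently
        apply hw
        apply hNV
        rw [Metric.mem_ball, dist_comm]
        linarith
      have hB : ∃ c, 0 < c ∧ ∀ n, c ≤ d n := by
        by_contra hB
        obtain ⟨s, hs, hsP⟩ := Filter.extraction_forall_of_frequently
          (fun m : ℕ => freq_lt_of_not_bddBelow hdpos hB m)
        obtain ⟨t, ht, V, v, hVo, hVc, hVp, hvV, hconv⟩ := h s hs
        obtain ⟨ε, hε0, hball⟩ := Metric.isOpen_iff.mp hVo v hvV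
        have hCV : Metric.closedBall v (ε/2) ⊆ V :=
          (closedBall_subset_ball (by linarith)).trans hball
        have h2 := hconv.2.1 _ hCV (isCompact_closedBall _ _)
        have h1 : ∀ᶠ k in atTop, dist (u (s (t k))) v < ε/4 :=
          Metric.tendsto_nhds.mp hconv.1 _ (by linarith)
        obtain ⟨m, hm⟩ := exists_nat_one_div_lt (show (0:ℝ) < ε/4 by linarith)
        have h3 : ∀ᶠ k in atTop, (1:ℝ)/((t k : ℝ) + 1) < ε/4 := by
          filter_upwards [Filter.eventually_ge_atTop m] with k hk
          have hmt : (m:ℝ) ≤ (t k : ℝ) := Nat.cast_le.mpr (le_trans hk ht.le_apply)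
          calc (1:ℝ)/((t k : ℝ) + 1) ≤ 1/((m:ℝ)+1) :=
            one_div_le_one_div_of_le (by positivity) (by linarith)
          _ < ε/4 := hm
        obtain ⟨k, hk2, hk1, hk3⟩ := (h2.and (h1.and h3)).exists
        have hball2 : ball (u (s (t k))) (ε/4) ⊆ U (s (t k)) := by
          refine (fun y hy => hk2 ?_)
          rw [Metric.mem_ball] at hy
          rw [Metric.mem_closedBall]
          calc dist y v ≤ dist y (u (s (t k))) + dist (u (s (t k))) v := dist_triangle _ _ _
          _ ≤ ε/2 := by linarith
        have h4 : ε/4 ≤ d (s (t k)) :=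
          le_infDist_frontier_of_ball_subset (hUopen _) (hfr _) hball2
        have h5 : d (s (t k)) < 1/((t k : ℝ)+1) := hsP (t k)
        linarith
      obtain ⟨L1, hL1⟩ := hA
      obtain ⟨c, hc0, hc⟩ := hB
      refine ⟨max L1 (max (1/c) 2),
        lt_of_lt_of_le one_lt_two (le_trans (le_max_right _ _) (le_max_right _ _)),
        fun n => ⟨?_, le_trans (hL1 n) (le_max_left _ _)⟩⟩
      have hLpos : (0:ℝ) < max L1 (max (1/c) 2) :=
        lt_of_lt_of_le two_pos (le_trans (le_max_right _ _) (le_max_right _ _))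
      have h1c : 1/c ≤ max L1 (max (1/c) 2) := le_trans (le_max_left _ _) (le_max_right _ _)
      calc 1 / max L1 (max (1/c) 2) ≤ 1 / (1/c) :=
            one_div_le_one_div_of_le (by positivity) h1c
      _ = c := one_div_one_div c
      _ ≤ d n := hc n
  · rintro ⟨⟨M, hM⟩, L, hL, hLd⟩
    intro s hs
    have hL0 : (0:ℝ) < L := lt_trans one_pos hL
    have hballL : ∀ n, ball (u n) (1/L) ⊆ U n := fun n =>
      ball_subset_of_infDist (hUopen n) (hun n) (hLd n).1
    have hbex : ∀ n, ∃ x ∈ frontier (U n), dist (u n) x < L + 1 := fun n =>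
      (Metric.infDist_lt_iff (hfr n)).mp (lt_of_le_of_lt (hLd n).2 (by linarith))
    choose b hbfr hbd using hbex
    have hbK : ∀ n, b n ∉ U n := fun n => by
      have h1 := hbfr n
      rw [(hUopen n).frontier_eq] at h1
      exact h1.2
    -- Step 1 : subsequence where markings converge
    obtain ⟨v, -, t1, ht1, hvconv⟩ := (isCompact_closedBall (0:ℂ) M).tendsto_subseq
      (x := fun k => u (s k)) (fun k => by
        rw [Metric.mem_closedBall, dist_zero_right]
        exact hM (s k))
    -- Step 2 : subsequence where marked boundary points converge
    obtain ⟨w, -, t2, ht2, hwconv⟩ := (isCompact_closedBall (0:ℂ) (M + L + 1)).tendsto_subseq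
      (x := fun k => b (s (t1 k))) (fun k => by
        rw [Metric.mem_closedBall, dist_zero_right]
        calc ‖b (s (t1 k))‖ = ‖u (s (t1 k)) + (b (s (t1 k)) - u (s (t1 k)))‖ := by
              rw [add_sub_cancel]
        _ ≤ ‖u (s (t1 k))‖ + ‖b (s (t1 k)) - u (s (t1 k))‖ := norm_add_le _ _
        _ = ‖u (s (t1 k))‖ + dist (u (s (t1 k))) (b (s (t1 k))) := by
              rw [dist_eq_norm, norm_sub_rev]
        _ ≤ M + (L + 1) := add_le_add (by exact hM _) (hbd _).le
        _ = M + L + 1 := by ring)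
    -- Step 3 : subsequence where closures of images of complements converge (Hausdorff)
    have hKne : ∀ n, ((U n)ᶜ : Set ℂ).Nonempty := fun n => by
      obtain ⟨x, hx⟩ := (ne_univ_iff_exists_notMem _).mp (hUproper n)
      exact ⟨x, hx⟩
    set D : ℕ → TopologicalSpace.NonemptyCompacts Xc := fun k =>
      ⟨⟨Subtype.val ⁻¹' closure (phi '' (U (s (t1 (t2 k))))ᶜ),
        (isClosed_closure.preimage continuous_subtype_val).isCompact⟩,
        ⟨phiX (hKne (s (t1 (t2 k)))).choose,
          subset_closure (mem_image_of_mem _ (hKne (s (t1 (t2 k)))).choose_spec)⟩⟩ with hD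
    obtain ⟨Alim, t3, ht3, hDconv⟩ := CompactSpace.tendsto_subseq D
    set t : ℕ → ℕ := t1 ∘ t2 ∘ t3 with htdef
    have hts : StrictMono t := ht1.comp (ht2.comp ht3)
    set g : ℕ → ℕ := fun k => s (t k) with hg
    set A : Set Xc := (Alim : Set Xc) with hA
    have hAcl : IsClosed A := Alim.isCompact.isClosed
    have hDset : ∀ k, ((D (t3 k) : Set Xc)) = Subtype.val ⁻¹' closure (phi '' (U (g k))ᶜ) :=
      fun k => rfl
    have huconv : Tendsto (fun k => u (g k)) atTop (𝓝 v) :=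
      hvconv.comp ((ht2.comp ht3).tendsto_atTop)
    have hwconv' : Tendsto (fun k => b (g k)) atTop (𝓝 w) :=
      hwconv.comp (ht3.tendsto_atTop)
    have hHf : ∀ ε : ℝ≥0∞, 0 < ε →
        ∀ᶠ k in atTop, EMetric.hausdorffEdist ((D (t3 k)) : Set Xc) A < ε := by
      intro ε hε
      filter_upwards [EMetric.tendsto_nhds.mp hDconv ε hε] with k hk
      exact hk
    -- limsup lemma
    have hlimsup : ∀ (σ : ℕ → ℕ), Tendsto σ atTop atTop → ∀ (z : ℕ → ℂ) (zl : ℂ),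
        (∀ i, z i ∈ (U (g (σ i)))ᶜ) → Tendsto z atTop (𝓝 zl) → phiX zl ∈ A := by
      intro σ hσ z zl hz hzl
      have hmem : ∀ i, phiX (z i) ∈ (D (t3 (σ i)) : Set Xc) := fun i =>
        subset_closure (mem_image_of_mem _ (hz i))
      have key : ∀ ε : ℝ≥0∞, 0 < ε → EMetric.infEdist (phiX zl) A ≤ ε := by
        intro ε hε
        have hε2 : (0:ℝ≥0∞) < ε/2 := ENNReal.half_pos hε.ne'
        have e1 : ∀ᶠ i in atTop, EMetric.hausdorffEdist ((D (t3 (σ i))) : Set Xc) A < ε/2 :=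
          hσ.eventually (hHf (ε/2) hε2)
        have e2 : ∀ᶠ i in atTop, edist (phiX zl) (phiX (z i)) < ε/2 := by
          have hphi : Tendsto (fun i => phiX (z i)) atTop (𝓝 (phiX zl)) :=
            (continuous_phiX.continuousAt.tendsto).comp hzl
          filter_upwards [EMetric.tendsto_nhds.mp hphi (ε/2) hε2] with i hi
          rwa [edist_comm]
        obtain ⟨i, h1, h2⟩ := (e1.and e2).exists
        calc EMetric.infEdist (phiX zl) A
            ≤ EMetric.infEdist (phiX zl) (D (t3 (σ i)) : Set Xc)
              + EMetric.hausdorffEdist ((D (t3 (σ i))) : Set Xc) A :=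
              EMetric.infEdist_le_infEdist_add_hausdorffEdist
        _ ≤ edist (phiX zl) (phiX (z i)) + EMetric.hausdorffEdist ((D (t3 (σ i))) : Set Xc) A :=
              add_le_add (EMetric.infEdist_le_edist_of_mem (hmem i)) le_rfl
        _ ≤ ε/2 + ε/2 := add_le_add h2.le h1.le
        _ = ε := ENNReal.add_halves ε
      have h0 : EMetric.infEdist (phiX zl) A = 0 := by
        by_contra h0
        have hne : EMetric.infEdist (phiX zl) A ≠ ⊤ :=
          ne_top_of_le_ne_top (by simp) (key 1 one_pos)
        exact absurd (key _ (ENNReal.half_pos h0)) (not_le.mpr (ENNReal.half_lt_self h0 hne))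
      exact (EMetric.mem_iff_infEdist_zero_of_closed hAcl).mpr h0
    -- liminf lemma
    have hliminf : ∀ (zl : ℂ), phiX zl ∈ A → ∀ ε : ℝ, 0 < ε →
        ∀ᶠ k in atTop, ∃ y ∈ (U (g k))ᶜ, dist zl y < ε := by
      intro zl hzl ε hε
      obtain ⟨δ, hδ0, hδ⟩ :=
        Metric.continuousAt_iff.mp (continuousAt_psi (norm_phi_lt_one zl)) ε hε
      have h0 : EMetric.infEdist (phiX zl) A = 0 :=
        (EMetric.mem_iff_infEdist_zero_of_closed hAcl).mp hzl
      filter_upwards [hHf (ENNReal.ofReal (δ/2)) (ENNReal.ofReal_pos.mpr (by linarith))] with k hk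
      have hinf : EMetric.infEdist (phiX zl) (D (t3 k) : Set Xc) < ENNReal.ofReal (δ/2) := by
        calc EMetric.infEdist (phiX zl) (D (t3 k) : Set Xc)
            ≤ EMetric.infEdist (phiX zl) A + EMetric.hausdorffEdist A ((D (t3 k)) : Set Xc) :=
              EMetric.infEdist_le_infEdist_add_hausdorffEdist
        _ = EMetric.hausdorffEdist ((D (t3 k)) : Set Xc) A := by
              rw [h0, zero_add]; exact EMetric.hausdorffEdist_comm
        _ < ENNReal.ofReal (δ/2) := hk
      obtain ⟨y, hy, hyd⟩ := EMetric.infEdist_lt_iff.mp hinf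
      obtain ⟨p, hp, hpd⟩ := Metric.mem_closure_iff.mp hy (δ/2) (by linarith)
      obtain ⟨q, hq, rfl⟩ := hp
      refine ⟨q, hq, ?_⟩
      have h1 : dist (y : ℂ) (phi zl) < δ/2 := by
        have h2' := edist_lt_ofReal.mp hyd
        rw [Subtype.dist_eq] at h2'
        rw [dist_comm]
        exact h2'
      have h2 : dist (phi q) (phi zl) < δ := by
        calc dist (phi q) (phi zl) ≤ dist (phi q) (y : ℂ) + dist (y : ℂ) (phi zl) :=
              dist_triangle _ _ _
        _ < δ/2 + δ/2 := add_lt_add (by rw [dist_comm]; exact hpd) h1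
        _ = δ := by ring
      have h3 := hδ h2
      rw [psi_phi, psi_phi] at h3
      rw [dist_comm]
      exact h3
    -- the limit marking avoids the limit set
    have hvA : phiX v ∉ A := by
      intro hvA
      have h1 := hliminf v hvA (1/(2*L)) (by positivity)
      have h2 : ∀ᶠ k in atTop, dist (u (g k)) v < 1/(2*L) :=
        Metric.tendsto_nhds.mp huconv _ (by positivity)
      obtain ⟨k, ⟨y, hy, hyd⟩, h2k⟩ := (h1.and h2).exists
      apply hy
      apply hballL (g k)
      rw [Metric.mem_ball]
      have heq : 1/(2*L) + 1/(2*L) = 1/L := by rw [mul_comm, ← div_div]; exact add_halves _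
      calc dist y (u (g k)) ≤ dist y v + dist v (u (g k)) := dist_triangle _ _ _
      _ < 1/(2*L) + 1/(2*L) :=
            add_lt_add (by rw [dist_comm]; exact hyd) (by rw [dist_comm]; exact h2k)
      _ = 1/L := heq
    set Ω : Set ℂ := phiX ⁻¹' Aᶜ with hΩ
    have hΩo : IsOpen Ω := hAcl.isOpen_compl.preimage continuous_phiX
    have hvΩ : v ∈ Ω := hvA
    set V : Set ℂ := connectedComponentIn Ω v with hV
    have hVo : IsOpen V := hΩo.connectedComponentIn
    have hvV : v ∈ V := mem_connectedComponentIn hvΩ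
    have hVconn : IsConnected V := isConnected_connectedComponentIn_iff.mpr hvΩ
    have hwA : phiX w ∈ A :=
      hlimsup id tendsto_id (fun k => b (g k)) w (fun i => hbK (g i)) hwconv'
    have hVne : V ≠ univ := by
      intro hVu
      have hwV : w ∈ V := hVu ▸ mem_univ w
      exact (connectedComponentIn_subset Ω v hwV) hwA
    refine ⟨t, hts, V, v, hVo, hVconn, hVne, hvV, huconv, ?_, ?_⟩
    · -- compact subsets eventually inside
      intro C hCV hC
      by_contra hev
      obtain ⟨σ, hσ, hσP⟩ := Filter.extraction_of_frequently_atTop (Filter.not_eventually.mp hev)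
      have hzex : ∀ i, ∃ x ∈ C, x ∈ (U (g (σ i)))ᶜ := fun i => by
        obtain ⟨x, hx1, hx2⟩ := not_subset.mp (hσP i)
        exact ⟨x, hx1, hx2⟩
      choose z hzC hzK using hzex
      obtain ⟨zl, hzlC, ρ, hρ, hzconv⟩ := hC.tendsto_subseq hzC
      have hzlA : phiX zl ∈ A :=
        hlimsup (σ ∘ ρ) ((hσ.comp hρ).tendsto_atTop) (fun i => z (ρ i)) zl
          (fun i => hzK (ρ i)) hzconv
      exact (connectedComponentIn_subset Ω v (hCV hzlC)) hzlA
    · -- maximality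
      intro N hNo hNc hvN hNfreq
      have hNΩ : N ⊆ Ω := by
        intro x hxN
        by_contra hx
        have hxA : phiX x ∈ A := not_not.mp hx
        obtain ⟨ε, hε0, hball⟩ := Metric.isOpen_iff.mp hNo x hxN
        obtain ⟨k, hNk, y, hy, hyd⟩ := (hNfreq.and_eventually (hliminf x hxA ε hε0)).exists
        exact hy (hNk (hball (by rwa [Metric.mem_ball, dist_comm])))
      exact hNc.isPreconnected.subset_connectedComponentIn hvN hNΩ
end
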